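/- For every c ∈ ℝ³ with 0 < ‖c‖ < 2π and every x ∈ ℝ³, one has F(−c, −exp(skew(c))ᵀ x) = −F(c, x), where exp denotes the 3×3 matrix exponential. (This expresses that the logarithm coefficients of the inverse group element g⁻¹ = (−R⁻¹x, R⁻¹), R = exp(skew(c)), are the negatives of those of g = (x, R).) -/

import Mathlib

open Matrix
open scoped Nat

/-- The skew-symmetric matrix associated to a vector `c ∈ ℝ³`. -/
def skew (c : Fin 3 → ℝ) : Matrix (Fin 3) (Fin 3) ℝ :=
  !![0, -c 2, c 1; c 2, 0, -c 0; -c 1, c 0, 0]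

/-- The Euclidean norm of a vector in `ℝ³`. -/
noncomputable def enorm3 (c : Fin 3 → ℝ) : ℝ :=
  Real.sqrt (c 0 ^ 2 + c 1 ^ 2 + c 2 ^ 2)

lemma skew_cube (c : Fin 3 → ℝ) :
    skew c ^ 3 = (-(enorm3 c ^ 2)) • skew c := by
  have h : enorm3 c ^ 2 = c 0 ^ 2 + c 1 ^ 2 + c 2 ^ 2 := by
    rw [enorm3, Real.sq_sqrt]; positivity
  rw [h, pow_succ, pow_two]
  ext i j
  fin_cases i <;> fin_cases j <;>
    simp [skew, Matrix.mul_apply, Fin.sum_univ_succ] <;> ring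

lemma skew_pow_odd (c : Fin 3 → ℝ) (k : ℕ) :
    skew c ^ (2 * k + 1) = ((-1 : ℝ) ^ k * enorm3 c ^ (2 * k)) • skew c := by
  induction k with
  | zero => simp
  | succ k ih =>
    have h : 2 * (k + 1) + 1 = (2 * k + 1) + 2 := by ring
    rw [h, pow_add, ih, smul_mul_assoc,
      show skew c ^ 2 = skew c * skew c from sq (skew c), ← mul_assoc,
      show skew c * skew c * skew c = skew c ^ 3 by rw [pow_succ, pow_two], skew_cube, smul_smul]
    congr 1
    ring

lemma skew_pow_even (c : Fin 3 → ℝ) (k : ℕ) :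
    skew c ^ (2 * k + 2) = ((-1 : ℝ) ^ k * enorm3 c ^ (2 * k)) • (skew c * skew c) := by
  rw [show 2 * k + 2 = (2 * k + 1) + 1 by ring, pow_succ, skew_pow_odd, smul_mul_assoc]

/-- Rodrigues' formula for the matrix exponential of a skew-symmetric `3 × 3` matrix. -/
lemma rodrigues (c : Fin 3 → ℝ) (hq : enorm3 c ≠ 0) :
    NormedSpace.exp (skew c) =
      1 + (Real.sin (enorm3 c) / enorm3 c) • skew c +
        ((1 - Real.cos (enorm3 c)) / enorm3 c ^ 2) • (skew c * skew c) := by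
  set q := enorm3 c with hqdef
  rw [NormedSpace.exp_eq_tsum (𝕂 := ℝ)]
  refine HasSum.tsum_eq ?_
  have hsin : HasSum (fun k : ℕ => ((2 * k + 1)! : ℝ)⁻¹ • skew c ^ (2 * k + 1))
      ((Real.sin q / q) • skew c) := by
    have h1 := (Real.hasSum_sin q).div_const q
    have h2 := h1.smul_const (skew c)
    convert h2 using 2 with k
    rw [skew_pow_odd, smul_smul]
    congr 1
    field_simp
    ring
  have hcos : HasSum (fun k : ℕ => ((2 * k + 2)! : ℝ)⁻¹ • skew c ^ (2 * k + 2))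
      (((1 - Real.cos q) / q ^ 2) • (skew c * skew c)) := by
    have h0 := Real.hasSum_cos q
    rw [← hasSum_nat_add_iff' 1] at h0
    simp only [Finset.range_one, Finset.sum_singleton, pow_zero, Nat.mul_zero, one_mul,
      Nat.factorial_zero, Nat.cast_one, div_one] at h0
    have h0' := h0.neg
    rw [neg_sub] at h0'
    have h1 : HasSum (fun n : ℕ => (-1 : ℝ) ^ n * q ^ (2 * n + 2) / ↑(2 * n + 2)!)
        (1 - Real.cos q) := by
      have h2 : (fun n : ℕ => (-1 : ℝ) ^ n * q ^ (2 * n + 2) / ↑(2 * n + 2)!)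
          = fun n : ℕ => -((-1 : ℝ) ^ (n + 1) * q ^ (2 * (n + 1)) / ↑(2 * (n + 1))!) := by
        funext n
        have h3 : 2 * (n + 1) = 2 * n + 2 := by ring
        rw [h3, pow_succ]
        ring
      rw [h2]
      exact h0'
    have h2 := (h1.div_const (q ^ 2)).smul_const (skew c * skew c)
    convert h2 using 2 with k
    rw [skew_pow_even, smul_smul]
    congr 1
    field_simp
    ring
  have key : HasSum (fun n : ℕ => ((n + 1)! : ℝ)⁻¹ • skew c ^ (n + 1))
      ((Real.sin q / q) • skew c + ((1 - Real.cos q) / q ^ 2) • (skew c * skew c)) := by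
    refine HasSum.even_add_odd ?_ ?_
    · convert hsin using 2 with k
    · convert hcos using 2 with k
  rw [← hasSum_nat_add_iff' 1]
  convert key using 1
  · rfl
  simp
  abel

lemma mul_form (c : Fin 3 → ℝ) (u v u' v' : ℝ) :
    (1 + u • skew c + v • (skew c * skew c)) * (1 + u' • skew c + v' • (skew c * skew c)) =
    1 + (u + u' - enorm3 c ^ 2 * (u * v' + v * u')) • skew c +
      (v + v' + u * u' - enorm3 c ^ 2 * (v * v')) • (skew c * skew c) := by
  have h3 : skew c * skew c * skew c = (-(enorm3 c ^ 2)) • skew c := by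
    have := skew_cube c; rwa [pow_succ, pow_two] at this
  have h4 : skew c * (skew c * skew c) = (-(enorm3 c ^ 2)) • skew c := by
    rw [← mul_assoc]; exact h3
  have h5 : (skew c * skew c) * (skew c * skew c) = (-(enorm3 c ^ 2)) • (skew c * skew c) := by
    rw [mul_assoc, h4, mul_smul_comm]
  simp only [mul_add, add_mul, one_mul, mul_one, smul_mul_assoc, mul_smul_comm, smul_smul,
    h3, h4, h5]
  module

lemma scalar_id1 (q : ℝ) (hq0 : 0 < q) (hq2 : q < 2 * Real.pi) :
    (1/2 : ℝ) + (-(Real.sin q / q)) - q^2 * ((1/2) * ((1 - Real.cos q)/q^2)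
      + (q⁻¹^2 * (1 - q/2 * (Real.cos (q/2)/Real.sin (q/2)))) * (-(Real.sin q / q)))
      = -(1/2) := by
  have hq : q ≠ 0 := ne_of_gt hq0
  have hs : Real.sin (q/2) ≠ 0 :=
    ne_of_gt (Real.sin_pos_of_pos_of_lt_pi (by linarith) (by linarith))
  have hsin : Real.sin q = 2 * Real.sin (q/2) * Real.cos (q/2) := by
    have := Real.sin_two_mul (q/2); rw [show 2*(q/2) = q by ring] at this; linarith
  have hcos : Real.cos q = 1 - 2 * Real.sin (q/2)^2 := by
    have := Real.cos_two_mul (q/2); rw [show 2*(q/2) = q by ring] at this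
    have h2 := Real.sin_sq_add_cos_sq (q/2); nlinarith
  rw [hsin, hcos]
  have h2 := Real.sin_sq_add_cos_sq (q/2)
  set s := Real.sin (q/2)
  set co := Real.cos (q/2)
  field_simp
  ring_nf
  linear_combination (-2*q) * h2

lemma scalar_id2 (q : ℝ) (hq0 : 0 < q) (hq2 : q < 2 * Real.pi) :
    (q⁻¹^2 * (1 - q/2 * (Real.cos (q/2)/Real.sin (q/2)))) + (1 - Real.cos q)/q^2
      + (1/2) * (-(Real.sin q / q))
      - q^2 * ((q⁻¹^2 * (1 - q/2 * (Real.cos (q/2)/Real.sin (q/2)))) * ((1 - Real.cos q)/q^2))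
      = q⁻¹^2 * (1 - q/2 * (Real.cos (q/2)/Real.sin (q/2))) := by
  have hq : q ≠ 0 := ne_of_gt hq0
  have hs : Real.sin (q/2) ≠ 0 :=
    ne_of_gt (Real.sin_pos_of_pos_of_lt_pi (by linarith) (by linarith))
  have hsin : Real.sin q = 2 * Real.sin (q/2) * Real.cos (q/2) := by
    have := Real.sin_two_mul (q/2); rw [show 2*(q/2) = q by ring] at this; linarith
  have hcos : Real.cos q = 1 - 2 * Real.sin (q/2)^2 := by
    have := Real.cos_two_mul (q/2); rw [show 2*(q/2) = q by ring] at this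
    have h2 := Real.sin_sq_add_cos_sq (q/2); nlinarith
  rw [hsin, hcos]
  field_simp
  ring

lemma skew_neg (c : Fin 3 → ℝ) : skew (-c) = -skew c := by
  ext i j
  fin_cases i <;> fin_cases j <;> simp [skew]

lemma skew_transpose (c : Fin 3 → ℝ) : (skew c)ᵀ = skew (-c) := by
  ext i j
  fin_cases i <;> fin_cases j <;> simp [skew]

lemma enorm3_neg (c : Fin 3 → ℝ) : enorm3 (-c) = enorm3 c := by
  simp [enorm3]

/-- Equation (11) of the paper: the spatial coefficients of the logarithm on `SE(3)`,
`F(c,x) = (I − (1/2)·skew c + q⁻²·(1 − (q/2)·cot(q/2))·(skew c)²) x` with `q = ‖c‖`. -/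
noncomputable def F (c x : Fin 3 → ℝ) : Fin 3 → ℝ :=
  ((1 : Matrix (Fin 3) (Fin 3) ℝ) - (1 / 2 : ℝ) • skew c +
      ((enorm3 c)⁻¹ ^ 2 *
        (1 - enorm3 c / 2 * (Real.cos (enorm3 c / 2) / Real.sin (enorm3 c / 2)))) •
        (skew c * skew c)).mulVec x

/-- The logarithm coefficients of the inverse group element are the negatives
of those of the element: `F(−c, −(exp (skew c))ᵀ x) = −F(c, x)` for `0 < ‖c‖ < 2π`. -/
theorem F_inverse_element (c : Fin 3 → ℝ) (hc0 : 0 < enorm3 c)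
    (hc2 : enorm3 c < 2 * Real.pi) (x : Fin 3 → ℝ) :
    F (-c) (-(NormedSpace.exp (skew c))ᵀ.mulVec x) = -F c x := by
  have hq : enorm3 c ≠ 0 := ne_of_gt hc0
  set q : ℝ := enorm3 c with hqdef
  set β : ℝ := q⁻¹ ^ 2 * (1 - q / 2 * (Real.cos (q / 2) / Real.sin (q / 2))) with hβdef
  have hexpT : (NormedSpace.exp (skew c))ᵀ =
      1 + (-(Real.sin q / q)) • skew c +
        ((1 - Real.cos q) / q ^ 2) • (skew c * skew c) := by
    rw [← Matrix.exp_transpose, skew_transpose, rodrigues (-c) (by rwa [enorm3_neg]),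
      enorm3_neg, skew_neg, neg_mul_neg]
    rw [smul_neg, ← neg_smul]
  unfold F
  rw [skew_neg, enorm3_neg, ← hqdef, ← hβdef, neg_mul_neg, smul_neg, sub_neg_eq_add,
    Matrix.mulVec_neg, Matrix.mulVec_mulVec, hexpT, mul_form]
  rw [show (enorm3 (fun i => c i)) = q from rfl] -- no-op safeguard
  rw [scalar_id1 q hc0 hc2, scalar_id2 q hc0 hc2, neg_smul, ← sub_eq_add_neg]
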